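/- Let n ≥ 1, x₀ ∈ ℝⁿ and 0 < r < 1. Define U : ℝⁿ → ℝ by U(x) = exp(−1/(r² − |x−x₀|²)) if |x−x₀| < r and U(x) = 0 otherwise. Then for every x with |x−x₀| < r one has Δ U(x) ≤ (12 + 2n) (r² − |x−x₀|²)^{−4} U(x). -/

import Mathlib

open Set Filter

/-- The Laplacian of `f : ℝⁿ → ℝ` at `x`: the sum of the second partial
derivatives in the coordinate directions. -/
noncomputable def laplacian {n : ℕ} (f : EuclideanSpace ℝ (Fin n) → ℝ)
    (x : EuclideanSpace ℝ (Fin n)) : ℝ :=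
  ∑ i : Fin n, iteratedFDeriv ℝ 2 f x ![EuclideanSpace.single i 1, EuclideanSpace.single i 1]

variable {n : ℕ} {x₀ : EuclideanSpace ℝ (Fin n)} {r : ℝ}

lemma qd' (y : EuclideanSpace ℝ (Fin n)) :
    HasFDerivAt (fun z : EuclideanSpace ℝ (Fin n) => r^2 - ‖z - x₀‖^2)
      ((-2:ℝ) • (innerSL ℝ (y - x₀))) y := by
  have h1 : HasFDerivAt (fun z : EuclideanSpace ℝ (Fin n) => z - x₀)
      (ContinuousLinearMap.id ℝ _) y := (hasFDerivAt_id y).sub_const x₀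
  have h2 := h1.norm_sq
  have h3 := h2.const_sub (r^2)
  refine h3.congr_fderiv ?_
  ext w
  simp [two_smul]

lemma fd' (y : EuclideanSpace ℝ (Fin n)) (hy : 0 < r^2 - ‖y - x₀‖^2) :
    HasFDerivAt (fun z : EuclideanSpace ℝ (Fin n) => Real.exp (-1 / (r^2 - ‖z - x₀‖^2)))
      ((-2 * Real.exp (-1 / (r^2 - ‖y - x₀‖^2)) *
        ((r^2 - ‖y - x₀‖^2) * (r^2 - ‖y - x₀‖^2))⁻¹) • innerSL ℝ (y - x₀)) y := by
  have hinv := (hasDerivAt_inv hy.ne').comp_hasFDerivAt y (qd' (x₀ := x₀) (r := r) y)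
  have hexp := hinv.neg.exp
  have hfun : (fun z : EuclideanSpace ℝ (Fin n) => Real.exp (-1 / (r^2 - ‖z - x₀‖^2)))
      = fun z => Real.exp (-((fun t : ℝ => t⁻¹) ∘ fun z : EuclideanSpace ℝ (Fin n) =>
          r^2 - ‖z - x₀‖^2) z) := by
    funext z; rw [neg_div, one_div]; rfl
  rw [hfun]
  refine hexp.congr_fderiv ?_
  ext w
  simp only [ContinuousLinearMap.smul_apply, ContinuousLinearMap.neg_apply, smul_eq_mul,
    Function.comp_apply, Pi.neg_apply]
  rw [neg_div, one_div]
  field_simp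

set_option maxHeartbeats 1000000 in
/-- for the standard bump function `U` supported in `B(x₀, r)` (with
`0 < r < 1`), one has `Δ U(x) ≤ (12 + 2n) (r² − |x−x₀|²)⁻⁴ U(x)` whenever `|x−x₀| < r`. -/
theorem bump_laplacian_bound (n : ℕ) (hn : 1 ≤ n) (x₀ : EuclideanSpace ℝ (Fin n))
    (r : ℝ) (hr0 : 0 < r) (hr1 : r < 1)
    (U : EuclideanSpace ℝ (Fin n) → ℝ)
    (hU : ∀ x, U x = if ‖x - x₀‖ < r then Real.exp (-1 / (r ^ 2 - ‖x - x₀‖ ^ 2)) else 0) :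
    ∀ x, ‖x - x₀‖ < r →
      laplacian U x ≤ (12 + 2 * (n : ℝ)) * ((r ^ 2 - ‖x - x₀‖ ^ 2) ^ 4)⁻¹ * U x := by
  intro x hx
  have hq : ∀ y : EuclideanSpace ℝ (Fin n), ‖y - x₀‖ < r → 0 < r^2 - ‖y - x₀‖^2 := by
    intro y hy
    nlinarith [norm_nonneg (y - x₀)]
  have hQ := hq x hx
  have hball : ∀ y : EuclideanSpace ℝ (Fin n), ‖y - x₀‖ < r → (∀ᶠ z in nhds y, ‖z - x₀‖ < r) := by
    intro y hy
    have : Metric.ball x₀ r ∈ nhds y := Metric.isOpen_ball.mem_nhds (mem_ball_iff_norm.2 hy)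
    filter_upwards [this] with z hz
    exact mem_ball_iff_norm.1 hz
  have hUf : ∀ y : EuclideanSpace ℝ (Fin n), ‖y - x₀‖ < r →
      U =ᶠ[nhds y] fun z => Real.exp (-1 / (r ^ 2 - ‖z - x₀‖ ^ 2)) := by
    intro y hy
    filter_upwards [hball y hy] with z hz
    rw [hU z, if_pos hz]
  have hDU : fderiv ℝ U =ᶠ[nhds x]
      fun y => (-2 * Real.exp (-1 / (r^2 - ‖y - x₀‖^2)) *
        ((r^2 - ‖y - x₀‖^2) * (r^2 - ‖y - x₀‖^2))⁻¹) • innerSL ℝ (y - x₀) := by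
    filter_upwards [hball x hx] with y hy
    rw [(hUf y hy).fderiv_eq, (fd' y (hq y hy)).fderiv]
  -- second derivative
  have hu : HasFDerivAt (fun y : EuclideanSpace ℝ (Fin n) =>
      -2 * Real.exp (-1 / (r^2 - ‖y - x₀‖^2)))
      ((-2:ℝ) • ((-2 * Real.exp (-1 / (r^2 - ‖x - x₀‖^2)) *
        ((r^2 - ‖x - x₀‖^2) * (r^2 - ‖x - x₀‖^2))⁻¹) • innerSL ℝ (x - x₀))) x :=
    (fd' x hQ).const_mul (-2)
  have hmul := (qd' (x₀ := x₀) (r := r) x).mul (qd' (x₀ := x₀) (r := r) x)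
  have hvinv := (hasDerivAt_inv (mul_ne_zero hQ.ne' hQ.ne')).comp_hasFDerivAt x hmul
  have ha := hu.mul hvinv
  have hG : HasFDerivAt (fun y : EuclideanSpace ℝ (Fin n) => innerSL ℝ (y - x₀))
      (innerSL ℝ (E := EuclideanSpace ℝ (Fin n))) x := by
    have h1 : HasFDerivAt (fun z : EuclideanSpace ℝ (Fin n) => z - x₀)
        (ContinuousLinearMap.id ℝ _) x := (hasFDerivAt_id x).sub_const x₀
    have := (innerSL ℝ (E := EuclideanSpace ℝ (Fin n))).hasFDerivAt.comp x h1
    exact this.congr_fderiv (by ext; simp)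
  have hFd := ha.smul hG
  have hFd' : HasFDerivAt
      (fun y : EuclideanSpace ℝ (Fin n) =>
        (-2 * Real.exp (-1 / (r^2 - ‖y - x₀‖^2)) *
          ((r^2 - ‖y - x₀‖^2) * (r^2 - ‖y - x₀‖^2))⁻¹) • innerSL ℝ (y - x₀)) _ x := hFd
  have h2nd := hDU.fderiv_eq.trans hFd'.fderiv
  set Q : ℝ := r^2 - ‖x - x₀‖^2 with hQdef
  have key : ∀ i : Fin n,
      iteratedFDeriv ℝ 2 U x ![EuclideanSpace.single i 1, EuclideanSpace.single i 1]
        = Real.exp (-1/Q) * (4 * ((x - x₀) i)^2 - 2*Q^2 - 8*((x - x₀) i)^2*Q) / Q^4 := by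
    intro i
    rw [iteratedFDeriv_two_apply]
    simp only [Matrix.cons_val_zero, Matrix.cons_val_one, Matrix.head_cons]
    rw [h2nd]
    simp only [ContinuousLinearMap.add_apply, ContinuousLinearMap.smul_apply,
      ContinuousLinearMap.smulRight_apply, ContinuousLinearMap.coe_smul', Pi.smul_apply,
      ContinuousLinearMap.neg_apply, smul_eq_mul, Function.comp_apply,
      innerSL_apply_apply, EuclideanSpace.inner_single_right, RCLike.inner_apply,
      conj_trivial, mul_one, Pi.mul_apply, Pi.pow_apply, PiLp.single_apply, eq_self_iff_true,
      if_true]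
    rw [← hQdef]
    have hii : (innerSL ℝ (EuclideanSpace.single i (1:ℝ))) (EuclideanSpace.single i 1) = 1 := by simp
    erw [hii]
    field_simp
    ring
  have hS : ∑ i : Fin n, ((x - x₀) i)^2 = ‖x - x₀‖^2 := by
    rw [EuclideanSpace.norm_eq, Real.sq_sqrt (by positivity)]
    simp [Real.norm_eq_abs, sq_abs]
  have hE := Real.exp_pos (-1/Q)
  have hS1 : ‖x - x₀‖^2 < 1 := by nlinarith [norm_nonneg (x - x₀)]
  have hS0 : (0:ℝ) ≤ ‖x - x₀‖^2 := by positivity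
  rw [hU x, if_pos hx]
  have hlap : laplacian U x = ∑ i : Fin n,
      iteratedFDeriv ℝ 2 U x ![EuclideanSpace.single i 1, EuclideanSpace.single i 1] := rfl
  rw [hlap]
  simp_rw [key]
  have hsum : ∑ i : Fin n, Real.exp (-1/Q) * (4 * ((x - x₀) i)^2 - 2*Q^2 - 8*((x - x₀) i)^2*Q) / Q^4
      = Real.exp (-1/Q) * (4*‖x - x₀‖^2 - 2*(n:ℝ)*Q^2 - 8*‖x - x₀‖^2*Q)/Q^4 := by
    rw [← hS, ← Finset.sum_div, ← Finset.mul_sum]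
    congr 2
    simp only [Finset.sum_sub_distrib, Finset.sum_const, Finset.card_univ, Fintype.card_fin,
      nsmul_eq_mul, ← Finset.sum_mul, ← Finset.mul_sum]
    ring
  rw [hsum]
  have h4 : (0:ℝ) < Q^4 := by positivity
  rw [show (12 + 2*(n:ℝ)) * (Q^4)⁻¹ * Real.exp (-1/Q)
      = ((12 + 2*(n:ℝ)) * Real.exp (-1/Q))/Q^4 by ring]
  rw [div_le_div_iff_of_pos_right h4]
  have hcn : (0:ℝ) ≤ (n:ℝ) := Nat.cast_nonneg n
  nlinarith [hE.le, hQ.le, hS0, hS1, mul_nonneg hE.le hS0,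
    mul_nonneg (mul_nonneg hE.le hS0) hQ.le,
    mul_nonneg hcn (mul_nonneg hE.le (sq_nonneg Q)),
    mul_nonneg hE.le (by linarith : (0:ℝ) ≤ 1 - ‖x - x₀‖^2)]
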